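/- Let P be a finite graded shellable poset with a unique minimal element z, and let P′ be the poset obtained from P by adjoining one new element z′ whose order relations are: z′ < u in P′ if and only if z < u in P (so z′ covers nothing, z′ is covered by precisely the elements that cover z, and z′ is incomparable to z). Then P′ is shellable. -/

import Mathlib

variable {α : Type*}

/-- The closed interval of the subposet `S` (for the order relation `le`)
between `a` and `b`. -/
def orderInterval (le : α → α → Prop) (S : Set α) (a b : α) : Set α :=
  {z | z ∈ S ∧ le a z ∧ le z b}
/-- A finset is a chain of the subposet `S` for the order relation `le`. -/
def IsChainFinsetIn (le : α → α → Prop) (S : Set α) (C : Finset α) : Prop :=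
  (↑C : Set α) ⊆ S ∧ ∀ u ∈ C, ∀ v ∈ C, u ≠ v → (le u v ∨ le v u)

/-- A maximal chain of the subposet `S`: a chain of `S` which is not properly
contained in any other chain of `S`. -/
def IsMaxChainFinsetIn (le : α → α → Prop) (S : Set α) (C : Finset α) : Prop :=
  IsChainFinsetIn le S C ∧
    ∀ C' : Finset α, IsChainFinsetIn le S C' → C ⊆ C' → C' = C

/-- The subposet `S` is graded: in every closed interval all maximal chains
have the same length (cardinality). -/
def IsGradedIn (le : α → α → Prop) (S : Set α) : Prop :=
  ∀ a ∈ S, ∀ b ∈ S, le a b → ∀ C₁ C₂ : Finset α,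
    IsMaxChainFinsetIn le (orderInterval le S a b) C₁ →
    IsMaxChainFinsetIn le (orderInterval le S a b) C₂ → C₁.card = C₂.card

/-- `r` is a shelling order on the maximal chains of the subposet `S`: a strict
linear order on maximal chains such that whenever `m₁ < m₂`, there exist a maximal
chain `m₃ < m₂` and an element `x ∈ m₂` with `m₁ ∩ m₂ ⊆ m₃ ∩ m₂ = m₂ \ {x}`. -/
def IsShellingOrder [DecidableEq α] (le : α → α → Prop) (S : Set α)
    (r : Finset α → Finset α → Prop) : Prop :=
  (∀ C, IsMaxChainFinsetIn le S C → ¬r C C) ∧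
  (∀ C₁ C₂ C₃, IsMaxChainFinsetIn le S C₁ → IsMaxChainFinsetIn le S C₂ →
    IsMaxChainFinsetIn le S C₃ → r C₁ C₂ → r C₂ C₃ → r C₁ C₃) ∧
  (∀ C₁ C₂, IsMaxChainFinsetIn le S C₁ → IsMaxChainFinsetIn le S C₂ → C₁ ≠ C₂ →
    r C₁ C₂ ∨ r C₂ C₁) ∧
  (∀ m₁ m₂, IsMaxChainFinsetIn le S m₁ → IsMaxChainFinsetIn le S m₂ → r m₁ m₂ →
    ∃ m₃, IsMaxChainFinsetIn le S m₃ ∧ r m₃ m₂ ∧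
      ∃ x ∈ m₂, m₁ ∩ m₂ ⊆ m₃ ∩ m₂ ∧ m₃ ∩ m₂ = m₂.erase x)

/-- The subposet `S` is shellable. -/
def IsShellableIn [DecidableEq α] (le : α → α → Prop) (S : Set α) : Prop :=
  ∃ r : Finset α → Finset α → Prop, IsShellingOrder le S r

/-- The order relation of the poset obtained from `α` by adjoining one new
element `z'` (represented by `Sum.inr ()`) whose order relations are:
`z' < u` if and only if `z < u` in `α`.  Thus `z'` covers nothing, is covered
precisely by the elements covering `z`, and is incomparable to `z`. -/
def adjoinLE [PartialOrder α] (z : α) : α ⊕ Unit → α ⊕ Unit → Prop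
  | Sum.inl a, Sum.inl b => a ≤ b
  | Sum.inl _, Sum.inr _ => False
  | Sum.inr _, Sum.inl b => z < b
  | Sum.inr _, Sum.inr _ => True

set_option linter.unusedSectionVars false

namespace AdjoinShellAux

def ιF (m : Finset α) : Finset (α ⊕ Unit) := m.map ⟨Sum.inl, Sum.inl_injective⟩

def ιF' [DecidableEq α] (z : α) (m : Finset α) : Finset (α ⊕ Unit) :=
  insert (Sum.inr ()) ((m.erase z).map ⟨Sum.inl, Sum.inl_injective⟩)

@[simp] lemma inl_mem_ιF {m : Finset α} {a : α} : Sum.inl a ∈ ιF m ↔ a ∈ m := by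
  simp [ιF]

@[simp] lemma inr_mem_ιF {m : Finset α} {u : Unit} : (Sum.inr u : α ⊕ Unit) ∉ ιF m := by
  simp [ιF]

@[simp] lemma inl_mem_ιF' [DecidableEq α] {z a : α} {m : Finset α} :
    Sum.inl a ∈ ιF' z m ↔ a ∈ m ∧ a ≠ z := by
  simp [ιF', Finset.mem_erase, and_comm]

@[simp] lemma inr_mem_ιF' [DecidableEq α] {z : α} {m : Finset α} {u : Unit} :
    (Sum.inr u : α ⊕ Unit) ∈ ιF' z m := by
  cases u; simp [ιF']

lemma ιF_inj {m n : Finset α} (h : ιF m = ιF n) : m = n :=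
  Finset.map_injective _ h

lemma ιF_ne_ιF' [DecidableEq α] {z : α} {m n : Finset α} : ιF m ≠ ιF' z n := by
  intro h
  have h2 : (Sum.inr () : α ⊕ Unit) ∈ ιF' z n := inr_mem_ιF'
  rw [← h] at h2
  exact inr_mem_ιF h2

lemma ιF'_inj [DecidableEq α] {z : α} {m n : Finset α} (hm : z ∈ m) (hn : z ∈ n)
    (h : ιF' z m = ιF' z n) : m = n := by
  ext a
  by_cases haz : a = z
  · subst haz; simp [hm, hn]
  · constructor <;> intro ha
    · have h2 : Sum.inl a ∈ ιF' z n := h ▸ (inl_mem_ιF'.2 ⟨ha, haz⟩)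
      exact (inl_mem_ιF'.1 h2).1
    · have h2 : Sum.inl a ∈ ιF' z m := h.symm ▸ (inl_mem_ιF'.2 ⟨ha, haz⟩)
      exact (inl_mem_ιF'.1 h2).1


section Chains
variable [PartialOrder α] [DecidableEq α]

lemma z_mem_maxChain {z : α} (hbot : ∀ a, z ≤ a) {m : Finset α}
    (hm : IsMaxChainFinsetIn (· ≤ · : α → α → Prop) Set.univ m) : z ∈ m := by
  by_contra hz
  have hchain : IsChainFinsetIn (· ≤ · : α → α → Prop) Set.univ (insert z m) := by
    refine ⟨Set.subset_univ _, ?_⟩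
    intro u hu v hv huv
    rcases Finset.mem_insert.1 hu with rfl | hu
    · exact Or.inl (hbot v)
    rcases Finset.mem_insert.1 hv with rfl | hv
    · exact Or.inr (hbot u)
    · exact hm.1.2 u hu v hv huv
  have h2 := hm.2 _ hchain (Finset.subset_insert _ _)
  exact hz (h2 ▸ Finset.mem_insert_self z m)

lemma chain_ιF (z : α) {m : Finset α}
    (hm : IsChainFinsetIn (· ≤ · : α → α → Prop) Set.univ m) :
    IsChainFinsetIn (adjoinLE z) Set.univ (ιF m) := by
  refine ⟨Set.subset_univ _, ?_⟩
  rintro (a | u) hu (b | v) hv huv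
  · have hab : a ≠ b := by simpa using huv
    exact hm.2 a (inl_mem_ιF.1 hu) b (inl_mem_ιF.1 hv) hab
  · exact absurd hv inr_mem_ιF
  · exact absurd hu inr_mem_ιF
  · exact absurd hu inr_mem_ιF

lemma chain_ιF' (z : α) (hbot : ∀ a, z ≤ a) {m : Finset α}
    (hm : IsChainFinsetIn (· ≤ · : α → α → Prop) Set.univ m) :
    IsChainFinsetIn (adjoinLE z) Set.univ (ιF' z m) := by
  refine ⟨Set.subset_univ _, ?_⟩
  rintro (a | u) hu (b | v) hv huv
  · have hab : a ≠ b := by simpa using huv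
    exact hm.2 a (inl_mem_ιF'.1 hu).1 b (inl_mem_ιF'.1 hv).1 hab
  · exact Or.inr (lt_of_le_of_ne (hbot a) (Ne.symm (inl_mem_ιF'.1 hu).2))
  · exact Or.inl (lt_of_le_of_ne (hbot b) (Ne.symm (inl_mem_ιF'.1 hv).2))
  · exact Or.inl trivial

lemma decomp {C : Finset (α ⊕ Unit)} (h : (Sum.inr () : α ⊕ Unit) ∉ C) :
    C = ιF C.toLeft := by
  ext x
  cases x with
  | inl a => simp [Finset.mem_toLeft]
  | inr u => cases u; simp [h]

lemma decomp' (z : α) {C : Finset (α ⊕ Unit)} (h : (Sum.inr () : α ⊕ Unit) ∈ C)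
    (hz : Sum.inl z ∉ C) : C = ιF' z (insert z C.toLeft) := by
  ext x
  cases x with
  | inl a =>
    simp only [inl_mem_ιF', Finset.mem_insert, Finset.mem_toLeft]
    constructor
    · intro ha
      exact ⟨Or.inr ha, fun h' => hz (h' ▸ ha)⟩
    · rintro ⟨(rfl | ha), haz⟩
      · exact absurd rfl haz
      · exact ha
  | inr u => cases u; simp [h]

lemma toLeft_chain {z : α} {C : Finset (α ⊕ Unit)}
    (hC : IsChainFinsetIn (adjoinLE z) Set.univ C) :
    IsChainFinsetIn (· ≤ · : α → α → Prop) Set.univ C.toLeft := by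
  refine ⟨Set.subset_univ _, ?_⟩
  intro u hu v hv huv
  have h2 := hC.2 _ (Finset.mem_toLeft.1 hu) _ (Finset.mem_toLeft.1 hv) (by simpa using huv)
  exact h2

lemma inr_inl_z_not_both {z : α} {C : Finset (α ⊕ Unit)}
    (hC : IsChainFinsetIn (adjoinLE z) Set.univ C)
    (hr : (Sum.inr () : α ⊕ Unit) ∈ C) : Sum.inl z ∉ C := by
  intro hz
  have h2 := hC.2 _ hz _ hr (by simp)
  rcases h2 with h2 | h2
  · exact h2
  · exact lt_irrefl z h2

lemma maxChain_ιF {z : α} {m : Finset α}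
    (hm : IsMaxChainFinsetIn (· ≤ · : α → α → Prop) Set.univ m) (hzm : z ∈ m) :
    IsMaxChainFinsetIn (adjoinLE z) Set.univ (ιF m) := by
  refine ⟨chain_ιF z hm.1, ?_⟩
  intro C' hC' hsub
  have hr : (Sum.inr () : α ⊕ Unit) ∉ C' := by
    intro hr
    exact inr_inl_z_not_both hC' hr (hsub (inl_mem_ιF.2 hzm))
  have hdec := decomp hr
  have hsub' : m ⊆ C'.toLeft := fun a ha => Finset.mem_toLeft.2 (hsub (inl_mem_ιF.2 ha))
  have h2 := hm.2 _ (toLeft_chain hC') hsub'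
  rw [hdec, h2]

lemma maxChain_ιF' {z : α} (hbot : ∀ a, z ≤ a) {m : Finset α}
    (hm : IsMaxChainFinsetIn (· ≤ · : α → α → Prop) Set.univ m) (hzm : z ∈ m) :
    IsMaxChainFinsetIn (adjoinLE z) Set.univ (ιF' z m) := by
  refine ⟨chain_ιF' z hbot hm.1, ?_⟩
  intro C' hC' hsub
  have hr : (Sum.inr () : α ⊕ Unit) ∈ C' := hsub inr_mem_ιF'
  have hz : Sum.inl z ∉ C' := inr_inl_z_not_both hC' hr
  have hchain : IsChainFinsetIn (· ≤ · : α → α → Prop) Set.univ (insert z C'.toLeft) := by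
    refine ⟨Set.subset_univ _, ?_⟩
    intro u hu v hv huv
    rcases Finset.mem_insert.1 hu with rfl | hu
    · exact Or.inl (hbot v)
    rcases Finset.mem_insert.1 hv with rfl | hv
    · exact Or.inr (hbot u)
    · exact (toLeft_chain hC').2 u hu v hv huv
  have hsub' : m ⊆ insert z C'.toLeft := by
    intro a ha
    by_cases haz : a = z
    · subst haz; exact Finset.mem_insert_self _ _
    · exact Finset.mem_insert_of_mem
        (Finset.mem_toLeft.2 (hsub (inl_mem_ιF'.2 ⟨ha, haz⟩)))
  have h2 := hm.2 _ hchain hsub'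
  rw [decomp' z hr hz, h2]

lemma maxChain_adjoin {z : α} (hbot : ∀ a, z ≤ a) {C : Finset (α ⊕ Unit)}
    (hC : IsMaxChainFinsetIn (adjoinLE z) Set.univ C) :
    (∃ m, IsMaxChainFinsetIn (· ≤ · : α → α → Prop) Set.univ m ∧ z ∈ m ∧ C = ιF m) ∨
    (∃ m, IsMaxChainFinsetIn (· ≤ · : α → α → Prop) Set.univ m ∧ z ∈ m ∧ C = ιF' z m) := by
  by_cases hr : (Sum.inr () : α ⊕ Unit) ∈ C
  · right
    have hz : Sum.inl z ∉ C := inr_inl_z_not_both hC.1 hr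
    refine ⟨insert z C.toLeft, ⟨⟨Set.subset_univ _, ?_⟩, ?_⟩,
      Finset.mem_insert_self _ _, decomp' z hr hz⟩
    · intro u hu v hv huv
      rcases Finset.mem_insert.1 hu with rfl | hu
      · exact Or.inl (hbot v)
      rcases Finset.mem_insert.1 hv with rfl | hv
      · exact Or.inr (hbot u)
      · exact (toLeft_chain hC.1).2 u hu v hv huv
    · intro m' hm' hsubm
      have hsubC : C ⊆ ιF' z m' := by
        intro x hx
        cases x with
        | inl a =>
          have ha : a ∈ C.toLeft := Finset.mem_toLeft.2 hx
          have haz : a ≠ z := fun h => hz (h ▸ hx)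
          exact inl_mem_ιF'.2 ⟨hsubm (Finset.mem_insert_of_mem ha), haz⟩
        | inr u => cases u; exact inr_mem_ιF'
      have h2 := hC.2 _ (chain_ιF' z hbot hm') hsubC
      have h3 : ιF' z m' = ιF' z (insert z C.toLeft) := by
        rw [h2]; exact decomp' z hr hz
      exact ιF'_inj (hsubm (Finset.mem_insert_self _ _)) (Finset.mem_insert_self _ _) h3
  · left
    have hdec := decomp hr
    refine ⟨C.toLeft, ⟨toLeft_chain hC.1, ?_⟩, ?_, hdec⟩
    · intro m' hm' hsubm
      have hsubC : C ⊆ ιF m' := by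
        intro x hx
        cases x with
        | inl a => exact inl_mem_ιF.2 (hsubm (Finset.mem_toLeft.2 hx))
        | inr u => cases u; exact absurd hx hr
      have h2 := hC.2 _ (chain_ιF z hm') hsubC
      exact ιF_inj (h2.trans hdec)
    · -- z ∈ C.toLeft
      by_contra hzC
      have hchain : IsChainFinsetIn (adjoinLE z) Set.univ (insert (Sum.inl z) C) := by
        refine ⟨Set.subset_univ _, ?_⟩
        intro u hu v hv huv
        rcases Finset.mem_insert.1 hu with rfl | hu
        · rcases Finset.mem_insert.1 hv with rfl | hv
          · exact absurd rfl huv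
          · cases v with
            | inl b => exact Or.inl (hbot b)
            | inr w => cases w; exact absurd hv hr
        rcases Finset.mem_insert.1 hv with rfl | hv
        · cases u with
          | inl a => exact Or.inr (hbot a)
          | inr w => cases w; exact absurd hu hr
        · exact hC.1.2 u hu v hv huv
      have h2 := hC.2 _ hchain (Finset.subset_insert _ _)
      have : Sum.inl z ∈ C := h2 ▸ Finset.mem_insert_self _ _
      exact hzC (Finset.mem_toLeft.2 this)

end Chains
end AdjoinShellAux


open AdjoinShellAux

/-- Let `P` be a finite graded shellable poset with a unique
minimal element `z`, and let `P'` be obtained from `P` by adjoining one new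
element `z'` with `z' < u` iff `z < u`.  Then `P'` is shellable. -/
theorem adjoin_second_minimum_shellable
    [PartialOrder α] [Fintype α] [DecidableEq α]
    (hgraded : IsGradedIn (· ≤ · : α → α → Prop) Set.univ)
    (hshell : IsShellableIn (· ≤ · : α → α → Prop) Set.univ)
    (z : α) (hmin : IsMin z) (huniq : ∀ w : α, IsMin w → w = z) :
    IsShellableIn (adjoinLE z) (Set.univ : Set (α ⊕ Unit)) := by
  classical
  obtain ⟨r, hirr, htrans, htot, hhom⟩ := hshell
  have hbot : ∀ a : α, z ≤ a := by
    intro a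
    obtain ⟨m, hmmem, hmmin⟩ := Finset.exists_minimal
      (s := Finset.univ.filter (· ≤ a)) ⟨a, by simp⟩
    have hma : m ≤ a := (Finset.mem_filter.1 hmmem).2
    have hm : IsMin m := by
      intro c hc
      rcases eq_or_lt_of_le hc with rfl | hlt
      · exact le_rfl
      · exact absurd hlt (not_lt_of_ge (hmmin (by simp [le_trans hc hma]) hlt.le))
    calc z = m := (huniq m hm).symm
      _ ≤ a := hma
  refine ⟨fun C D =>
    (∃ m n, IsMaxChainFinsetIn (· ≤ · : α → α → Prop) Set.univ m ∧
        IsMaxChainFinsetIn (· ≤ · : α → α → Prop) Set.univ n ∧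
        r m n ∧ C = ιF m ∧ D = ιF n) ∨
    (∃ m n, IsMaxChainFinsetIn (· ≤ · : α → α → Prop) Set.univ m ∧
        IsMaxChainFinsetIn (· ≤ · : α → α → Prop) Set.univ n ∧
        C = ιF m ∧ D = ιF' z n) ∨
    (∃ m n, IsMaxChainFinsetIn (· ≤ · : α → α → Prop) Set.univ m ∧
        IsMaxChainFinsetIn (· ≤ · : α → α → Prop) Set.univ n ∧
        r m n ∧ C = ιF' z m ∧ D = ιF' z n), ?_, ?_, ?_, ?_⟩
  · -- irreflexivity
    rintro C hC (⟨m, n, hm, hn, hr, rfl, hEq⟩ | ⟨m, n, hm, hn, rfl, hEq⟩ |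
      ⟨m, n, hm, hn, hr, rfl, hEq⟩)
    · obtain rfl := ιF_inj hEq
      exact hirr m hm hr
    · exact ιF_ne_ιF' hEq
    · obtain rfl := ιF'_inj (z_mem_maxChain hbot hm) (z_mem_maxChain hbot hn) hEq
      exact hirr m hm hr
  · -- transitivity
    rintro C₁ C₂ C₃ h₁ h₂ h₃
      (⟨m₁, n₁, hm₁, hn₁, hr₁, rfl, rfl⟩ | ⟨m₁, n₁, hm₁, hn₁, rfl, rfl⟩ |
        ⟨m₁, n₁, hm₁, hn₁, hr₁, rfl, rfl⟩) <;>
      rintro (⟨m₂, n₂, hm₂, hn₂, hr₂, hEq, rfl⟩ | ⟨m₂, n₂, hm₂, hn₂, hEq, rfl⟩ |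
        ⟨m₂, n₂, hm₂, hn₂, hr₂, hEq, rfl⟩)
    · obtain rfl := ιF_inj hEq
      exact Or.inl ⟨m₁, n₂, hm₁, hn₂, htrans _ _ _ hm₁ hn₁ hn₂ hr₁ hr₂, rfl, rfl⟩
    · obtain rfl := ιF_inj hEq
      exact Or.inr (Or.inl ⟨m₁, n₂, hm₁, hn₂, rfl, rfl⟩)
    · exact absurd hEq ιF_ne_ιF'
    · exact absurd hEq.symm ιF_ne_ιF'
    · exact absurd hEq.symm ιF_ne_ιF'
    · obtain rfl := ιF'_inj (z_mem_maxChain hbot hn₁) (z_mem_maxChain hbot hm₂) hEq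
      exact Or.inr (Or.inl ⟨m₁, n₂, hm₁, hn₂, rfl, rfl⟩)
    · exact absurd hEq.symm ιF_ne_ιF'
    · exact absurd hEq.symm ιF_ne_ιF'
    · obtain rfl := ιF'_inj (z_mem_maxChain hbot hn₁) (z_mem_maxChain hbot hm₂) hEq
      exact Or.inr (Or.inr ⟨m₁, n₂, hm₁, hn₂, htrans _ _ _ hm₁ hn₁ hn₂ hr₁ hr₂, rfl, rfl⟩)
  · -- totality
    intro C₁ C₂ h₁ h₂ hne
    rcases maxChain_adjoin hbot h₁ with ⟨m, hm, hzm, rfl⟩ | ⟨m, hm, hzm, rfl⟩ <;>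
      rcases maxChain_adjoin hbot h₂ with ⟨n, hn, hzn, rfl⟩ | ⟨n, hn, hzn, rfl⟩
    · have hmn : m ≠ n := fun h => hne (by rw [h])
      rcases htot m n hm hn hmn with h | h
      · exact Or.inl (Or.inl ⟨m, n, hm, hn, h, rfl, rfl⟩)
      · exact Or.inr (Or.inl ⟨n, m, hn, hm, h, rfl, rfl⟩)
    · exact Or.inl (Or.inr (Or.inl ⟨m, n, hm, hn, rfl, rfl⟩))
    · exact Or.inr (Or.inr (Or.inl ⟨n, m, hn, hm, rfl, rfl⟩))
    · have hmn : m ≠ n := fun h => hne (by rw [h])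
      rcases htot m n hm hn hmn with h | h
      · exact Or.inl (Or.inr (Or.inr ⟨m, n, hm, hn, h, rfl, rfl⟩))
      · exact Or.inr (Or.inr (Or.inr ⟨n, m, hn, hm, h, rfl, rfl⟩))
  · -- shelling condition
    rintro m₁ m₂ h₁ h₂ (⟨m, n, hm, hn, hr, rfl, rfl⟩ | ⟨m, n, hm, hn, rfl, rfl⟩ |
      ⟨m, n, hm, hn, hr, rfl, rfl⟩)
    · obtain ⟨m₃, hm₃, hr₃, x, hx, hsub, heq⟩ := hhom m n hm hn hr
      refine ⟨ιF m₃, maxChain_ιF hm₃ (z_mem_maxChain hbot hm₃),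
        Or.inl ⟨m₃, n, hm₃, hn, hr₃, rfl, rfl⟩, Sum.inl x, inl_mem_ιF.2 hx, ?_, ?_⟩
      · intro y hy
        obtain ⟨hy1, hy2⟩ := Finset.mem_inter.1 hy
        cases y with
        | inl a =>
          have h3 : a ∈ m₃ ∩ n :=
            hsub (Finset.mem_inter.2 ⟨inl_mem_ιF.1 hy1, inl_mem_ιF.1 hy2⟩)
          exact Finset.mem_inter.2 ⟨inl_mem_ιF.2 (Finset.mem_inter.1 h3).1, hy2⟩
        | inr u => exact absurd hy1 inr_mem_ιF
      · have hpt := Finset.ext_iff.1 heq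
        ext y
        cases y with
        | inl a =>
          have h3 := hpt a
          simp only [Finset.mem_inter, Finset.mem_erase] at h3
          simp only [Finset.mem_inter, Finset.mem_erase, inl_mem_ιF, ne_eq, Sum.inl.injEq]
          tauto
        | inr u => simp
    · refine ⟨ιF n, maxChain_ιF hn (z_mem_maxChain hbot hn),
        Or.inr (Or.inl ⟨n, n, hn, hn, rfl, rfl⟩), Sum.inr (), inr_mem_ιF', ?_, ?_⟩
      · intro y hy
        obtain ⟨hy1, hy2⟩ := Finset.mem_inter.1 hy
        cases y with
        | inl a =>
          exact Finset.mem_inter.2 ⟨inl_mem_ιF.2 (inl_mem_ιF'.1 hy2).1, hy2⟩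
        | inr u => exact absurd hy1 inr_mem_ιF
      · ext y
        cases y with
        | inl a => simp
        | inr u => cases u; simp
    · obtain ⟨m₃, hm₃, hr₃, x, hx, hsub, heq⟩ := hhom m n hm hn hr
      have hzm₃ := z_mem_maxChain hbot hm₃
      have hzn := z_mem_maxChain hbot hn
      have hzx : z ∈ n.erase x := heq ▸ Finset.mem_inter.2 ⟨hzm₃, hzn⟩
      have hzx' : z ≠ x := (Finset.mem_erase.1 hzx).1
      refine ⟨ιF' z m₃, maxChain_ιF' hbot hm₃ hzm₃,
        Or.inr (Or.inr ⟨m₃, n, hm₃, hn, hr₃, rfl, rfl⟩), Sum.inl x,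
        inl_mem_ιF'.2 ⟨hx, Ne.symm hzx'⟩, ?_, ?_⟩
      · intro y hy
        obtain ⟨hy1, hy2⟩ := Finset.mem_inter.1 hy
        cases y with
        | inl a =>
          obtain ⟨ha1, haz⟩ := inl_mem_ιF'.1 hy1
          obtain ⟨ha2, -⟩ := inl_mem_ιF'.1 hy2
          have h3 : a ∈ m₃ ∩ n := hsub (Finset.mem_inter.2 ⟨ha1, ha2⟩)
          exact Finset.mem_inter.2 ⟨inl_mem_ιF'.2 ⟨(Finset.mem_inter.1 h3).1, haz⟩, hy2⟩
        | inr u => exact Finset.mem_inter.2 ⟨inr_mem_ιF', inr_mem_ιF'⟩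
      · have hpt := Finset.ext_iff.1 heq
        ext y
        cases y with
        | inl a =>
          have h3 := hpt a
          simp only [Finset.mem_inter, Finset.mem_erase] at h3
          simp only [Finset.mem_inter, Finset.mem_erase, inl_mem_ιF', ne_eq, Sum.inl.injEq]
          tauto
        | inr u => cases u; simp
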